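/- Let 0 ≤ a < b ≤ 1, let f : ℝ → ℝ be a nonnegative integrable function with ∫_a^b f(ξ) dξ = 1, and let F(x) = ∫_a^x f(ξ) dξ. Let T, n ∈ ℕ, let y_1,…,y_n ∈ {0,1}, and let ŷ_k ∈ [a,b] for k ∈ {1−T,…,n}. Let ω_1,…,ω_T ≥ 0. Then the expected value (over the threshold) of the value-weighted false negatives wFN(ξ) = Σ_{i=1}^n y_i ( 1 − Σ_{j=1}^T ω_j 𝟙_{ŷ_{i−j} > ξ} ) 𝟙_{ŷ_i < ξ} satisfies ∫_a^b wFN(ξ) f(ξ) dξ = Σ_{i=1}^n y_i ( 1 − F(ŷ_i) − Σ_{j=1}^T ω_j D_i(j) ), where D_i(j) = F(ŷ_{i−j}) − F(min{ŷ_i, ŷ_{i−j}}) = max{ F(ŷ_{i−j}) − F(ŷ_i), 0 }. -/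

import Mathlib

open MeasureTheory


private lemma intervalIntegrable_finset_sum {ι : Type*} (s : Finset ι)
    {G : ι → ℝ → ℝ} {μ : MeasureTheory.Measure ℝ} {a b : ℝ}
    (h : ∀ i ∈ s, IntervalIntegrable (G i) μ a b) :
    IntervalIntegrable (fun ξ => ∑ i ∈ s, G i ξ) μ a b := by
  classical
  induction s using Finset.induction with
  | empty =>
    simp only [Finset.sum_empty]
    exact ⟨MeasureTheory.integrable_zero _ _ _, MeasureTheory.integrable_zero _ _ _⟩
  | insert _ _ hx ih =>
    simp only [Finset.sum_insert hx]
    exact (h _ (Finset.mem_insert_self _ _)).add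
      (ih fun i hi => h i (Finset.mem_insert_of_mem hi))

set_option maxHeartbeats 1000000 in
/-- Expected value over the threshold of the value-weighted false negatives for
`g = g_prod`, together with the identity `D_i(j) = max{F(ŷ_{i-j}) - F(ŷ_i), 0}`. -/
theorem stmt12 (a b : ℝ) (ha : 0 ≤ a) (hab : a < b) (hb : b ≤ 1)
    (f : ℝ → ℝ) (hf_nonneg : ∀ x, 0 ≤ f x)
    (hf_int : IntervalIntegrable f volume a b)
    (hf_one : (∫ ξ in a..b, f ξ) = 1)
    (F : ℝ → ℝ) (hF : ∀ x, F x = ∫ ξ in a..x, f ξ)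
    (T n : ℕ)
    (y : ℕ → ℝ) (hy : ∀ i ∈ Finset.Icc 1 n, y i = 0 ∨ y i = 1)
    (yh : ℤ → ℝ)
    (hyh : ∀ k : ℤ, 1 - (T : ℤ) ≤ k → k ≤ (n : ℤ) → yh k ∈ Set.Icc a b)
    (ω : ℕ → ℝ) (hω : ∀ j ∈ Finset.Icc 1 T, 0 ≤ ω j) :
    ((∫ ξ in a..b,
        (∑ i ∈ Finset.Icc 1 n, y i *
            ((1 - ∑ j ∈ Finset.Icc 1 T,
                ω j * (if ξ < yh ((i : ℤ) - (j : ℤ)) then (1 : ℝ) else 0)) *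
              (if yh (i : ℤ) < ξ then (1 : ℝ) else 0))) * f ξ)
      = ∑ i ∈ Finset.Icc 1 n, y i *
          (1 - F (yh (i : ℤ)) - ∑ j ∈ Finset.Icc 1 T,
            ω j * (F (yh ((i : ℤ) - (j : ℤ)))
              - F (min (yh (i : ℤ)) (yh ((i : ℤ) - (j : ℤ))))))) ∧
    ∀ i ∈ Finset.Icc 1 n, ∀ j ∈ Finset.Icc 1 T,
      F (yh ((i : ℤ) - (j : ℤ))) - F (min (yh (i : ℤ)) (yh ((i : ℤ) - (j : ℤ))))
        = max (F (yh ((i : ℤ) - (j : ℤ))) - F (yh (i : ℤ))) 0 := by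
  have hab' : a ≤ b := hab.le
  -- integrability on subintervals
  have hsub : ∀ c d : ℝ, a ≤ c → d ≤ b → c ≤ d → Set.uIcc c d ⊆ Set.uIcc a b := by
    intro c d hc hd hcd
    rw [Set.uIcc_of_le hcd, Set.uIcc_of_le hab']
    exact Set.Icc_subset_Icc hc hd
  have hfint' : ∀ c d : ℝ, a ≤ c → d ≤ b → c ≤ d → IntervalIntegrable f volume c d := by
    intro c d hc hd hcd
    exact hf_int.mono_set (hsub c d hc hd hcd)
  -- F b = 1
  have hFb : F b = 1 := by rw [hF]; exact hf_one
  -- monotonicity of F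
  have hFmono : ∀ x ∈ Set.Icc a b, ∀ z ∈ Set.Icc a b, x ≤ z → F x ≤ F z := by
    intro x hx z hz hxz
    rw [hF, hF, ← sub_nonneg,
      intervalIntegral.integral_interval_sub_left (hfint' a z le_rfl hz.2 hz.1)
        (hfint' a x le_rfl hx.2 hx.1)]
    apply intervalIntegral.integral_nonneg hxz
    intro u _; exact hf_nonneg u
  -- F d - F c = ∫ c..d f
  have hFsub : ∀ c ∈ Set.Icc a b, ∀ d ∈ Set.Icc a b, F d - F c = ∫ ξ in c..d, f ξ := by
    intro c hc d hd
    rw [hF, hF]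
    exact intervalIntegral.integral_interval_sub_left (hfint' a d le_rfl hd.2 hd.1)
      (hfint' a c le_rfl hc.2 hc.1)
  -- integrability of bounded measurable multiple of f
  have hint_mul : ∀ g : ℝ → ℝ, Measurable g → (∀ ξ, ‖g ξ‖ ≤ 1) →
      IntervalIntegrable (fun ξ => g ξ * f ξ) volume a b := by
    intro g hg hg1
    have hfm : AEStronglyMeasurable f (volume.restrict (Set.uIoc a b)) := by
      rw [Set.uIoc_of_le hab']
      exact hf_int.aestronglyMeasurable
    apply hf_int.mono_fun (hg.aestronglyMeasurable.mul hfm)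
    · filter_upwards with ξ
      calc ‖g ξ * f ξ‖ = ‖g ξ‖ * ‖f ξ‖ := norm_mul _ _
        _ ≤ 1 * ‖f ξ‖ := by gcongr; exact hg1 ξ
        _ = ‖f ξ‖ := one_mul _
  have hmeas1 : ∀ c : ℝ, Measurable (fun ξ : ℝ => if c < ξ then (1:ℝ) else 0) := by
    intro c
    exact Measurable.ite measurableSet_Ioi measurable_const measurable_const
  have hmeas2 : ∀ d : ℝ, Measurable (fun ξ : ℝ => if ξ < d then (1:ℝ) else 0) := by
    intro d
    exact Measurable.ite measurableSet_Iio measurable_const measurable_const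
  have hbd1 : ∀ c ξ : ℝ, ‖(if c < ξ then (1:ℝ) else 0)‖ ≤ 1 := by
    intro c ξ; split <;> simp
  have hI1 : ∀ c : ℝ, IntervalIntegrable (fun ξ => (if c < ξ then (1:ℝ) else 0) * f ξ)
      volume a b := fun c => hint_mul _ (hmeas1 c) (hbd1 c)
  have hI2 : ∀ c d : ℝ, IntervalIntegrable
      (fun ξ => (if c < ξ then (1:ℝ) else 0) * (if ξ < d then (1:ℝ) else 0) * f ξ)
      volume a b := by
    intro c d
    exact hint_mul (fun ξ => (if c < ξ then (1:ℝ) else 0) * (if ξ < d then (1:ℝ) else 0))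
      ((hmeas1 c).mul (hmeas2 d))
      (by intro ξ; rw [norm_mul]
          calc ‖(if c < ξ then (1:ℝ) else 0)‖ * ‖(if ξ < d then (1:ℝ) else 0)‖
              ≤ 1 * 1 := by gcongr <;> [exact hbd1 c ξ; (split <;> simp)]
            _ = 1 := one_mul 1)
  -- value of first integral
  have hval1 : ∀ c ∈ Set.Icc a b,
      (∫ ξ in a..b, (if c < ξ then (1:ℝ) else 0) * f ξ) = 1 - F c := by
    intro c hc
    have h1 : IntervalIntegrable (fun ξ => (if c < ξ then (1:ℝ) else 0) * f ξ) volume a c :=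
      (hI1 c).mono_set (hsub a c le_rfl hc.2 hc.1)
    have h2 : IntervalIntegrable (fun ξ => (if c < ξ then (1:ℝ) else 0) * f ξ) volume c b :=
      (hI1 c).mono_set (hsub c b hc.1 le_rfl hc.2)
    rw [← intervalIntegral.integral_add_adjacent_intervals h1 h2]
    have e1 : (∫ ξ in a..c, (if c < ξ then (1:ℝ) else 0) * f ξ) = 0 := by
      rw [intervalIntegral.integral_congr (g := fun _ => (0:ℝ))]
      · simp
      · intro ξ hξ
        rw [Set.uIcc_of_le hc.1] at hξ
        show (if c < ξ then (1:ℝ) else 0) * f ξ = 0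
        rw [if_neg (not_lt.2 hξ.2), zero_mul]
    have e2 : (∫ ξ in c..b, (if c < ξ then (1:ℝ) else 0) * f ξ) = ∫ ξ in c..b, f ξ := by
      apply intervalIntegral.integral_congr_ae
      filter_upwards with ξ hξ
      rw [Set.uIoc_of_le hc.2] at hξ
      rw [if_pos hξ.1, one_mul]
    have e3 : (∫ ξ in c..b, f ξ) = 1 - F c := by
      rw [← hf_one, hF]
      exact (intervalIntegral.integral_interval_sub_left hf_int
        (hfint' a c le_rfl hc.2 hc.1)).symm
    rw [e1, e2, e3, zero_add]
  -- value of second integral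
  have hval2 : ∀ c ∈ Set.Icc a b, ∀ d ∈ Set.Icc a b,
      (∫ ξ in a..b, (if c < ξ then (1:ℝ) else 0) * (if ξ < d then (1:ℝ) else 0) * f ξ)
        = F d - F (min c d) := by
    intro c hc d hd
    rcases le_or_gt d c with h | h
    · have hz : ∀ ξ : ℝ,
          (if c < ξ then (1:ℝ) else 0) * (if ξ < d then (1:ℝ) else 0) * f ξ = 0 := by
        intro ξ
        split_ifs with h1 h2
        · exact absurd (h2.trans_le (h.trans h1.le)) (lt_irrefl ξ)
        · ring
        · ring
        · ring
      simp only [hz, intervalIntegral.integral_zero, min_eq_right h, sub_self]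
    · have hcd : c ≤ d := h.le
      have i1 : IntervalIntegrable
          (fun ξ => (if c < ξ then (1:ℝ) else 0) * (if ξ < d then (1:ℝ) else 0) * f ξ)
          volume a c := (hI2 c d).mono_set (hsub a c le_rfl hc.2 hc.1)
      have i2 : IntervalIntegrable
          (fun ξ => (if c < ξ then (1:ℝ) else 0) * (if ξ < d then (1:ℝ) else 0) * f ξ)
          volume c d := (hI2 c d).mono_set
            (Set.uIcc_subset_uIcc
              (by rw [Set.uIcc_of_le hab']; exact ⟨hc.1, hc.2⟩)
              (by rw [Set.uIcc_of_le hab']; exact ⟨hd.1, hd.2⟩))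
      have i3 : IntervalIntegrable
          (fun ξ => (if c < ξ then (1:ℝ) else 0) * (if ξ < d then (1:ℝ) else 0) * f ξ)
          volume d b := (hI2 c d).mono_set (hsub d b hd.1 le_rfl hd.2)
      rw [← intervalIntegral.integral_add_adjacent_intervals (i1.trans i2) i3,
        ← intervalIntegral.integral_add_adjacent_intervals i1 i2]
      have e1 : (∫ ξ in a..c,
          (if c < ξ then (1:ℝ) else 0) * (if ξ < d then (1:ℝ) else 0) * f ξ) = 0 := by
        rw [intervalIntegral.integral_congr (g := fun _ => (0:ℝ))]
        · simp
        · intro ξ hξ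
          rw [Set.uIcc_of_le hc.1] at hξ
          show (if c < ξ then (1:ℝ) else 0) * (if ξ < d then (1:ℝ) else 0) * f ξ = 0
          rw [if_neg (not_lt.2 hξ.2), zero_mul, zero_mul]
      have e3 : (∫ ξ in d..b,
          (if c < ξ then (1:ℝ) else 0) * (if ξ < d then (1:ℝ) else 0) * f ξ) = 0 := by
        rw [intervalIntegral.integral_congr (g := fun _ => (0:ℝ))]
        · simp
        · intro ξ hξ
          rw [Set.uIcc_of_le hd.2] at hξ
          show (if c < ξ then (1:ℝ) else 0) * (if ξ < d then (1:ℝ) else 0) * f ξ = 0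
          rw [if_neg (not_lt.2 hξ.1), mul_zero, zero_mul]
      have e2 : (∫ ξ in c..d,
          (if c < ξ then (1:ℝ) else 0) * (if ξ < d then (1:ℝ) else 0) * f ξ)
            = ∫ ξ in c..d, f ξ := by
        apply intervalIntegral.integral_congr_ae
        have hd0 : ∀ᵐ ξ : ℝ, ξ ≠ d := by
          rw [MeasureTheory.ae_iff]
          simp [Real.volume_singleton]
        filter_upwards [hd0] with ξ hne hξ
        rw [Set.uIoc_of_le hcd] at hξ
        rw [if_pos hξ.1, if_pos (lt_of_le_of_ne hξ.2 hne), one_mul, one_mul]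
      rw [e1, e2, e3, zero_add, add_zero, min_eq_left hcd, hFsub c hc d hd]
  -- index bounds
  have hmemc : ∀ i ∈ Finset.Icc 1 n, yh (i : ℤ) ∈ Set.Icc a b := by
    intro i hi
    rw [Finset.mem_Icc] at hi
    exact hyh _ (by omega) (by exact_mod_cast hi.2)
  have hmemd : ∀ i ∈ Finset.Icc 1 n, ∀ j ∈ Finset.Icc 1 T,
      yh ((i : ℤ) - (j : ℤ)) ∈ Set.Icc a b := by
    intro i hi j hj
    rw [Finset.mem_Icc] at hi hj
    exact hyh _ (by omega) (by omega)
  constructor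
  · -- main equality
    have hptw : ∀ ξ : ℝ,
        (∑ i ∈ Finset.Icc 1 n, y i *
            ((1 - ∑ j ∈ Finset.Icc 1 T,
                ω j * (if ξ < yh ((i : ℤ) - (j : ℤ)) then (1 : ℝ) else 0)) *
              (if yh (i : ℤ) < ξ then (1 : ℝ) else 0))) * f ξ
        = ∑ i ∈ Finset.Icc 1 n,
            (y i * ((if yh (i : ℤ) < ξ then (1:ℝ) else 0) * f ξ)
              - ∑ j ∈ Finset.Icc 1 T, (y i * ω j) *
                  ((if yh (i : ℤ) < ξ then (1:ℝ) else 0) *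
                    (if ξ < yh ((i : ℤ) - (j : ℤ)) then (1:ℝ) else 0) * f ξ)) := by
      intro ξ
      rw [Finset.sum_mul]
      apply Finset.sum_congr rfl
      intro i _
      have step : y i *
          ((1 - ∑ j ∈ Finset.Icc 1 T,
              ω j * (if ξ < yh ((i : ℤ) - (j : ℤ)) then (1 : ℝ) else 0)) *
            (if yh (i : ℤ) < ξ then (1 : ℝ) else 0)) * f ξ
          = y i * ((if yh (i : ℤ) < ξ then (1:ℝ) else 0) * f ξ)
            - y i * ((∑ j ∈ Finset.Icc 1 T,
                ω j * (if ξ < yh ((i : ℤ) - (j : ℤ)) then (1 : ℝ) else 0)) *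
                ((if yh (i : ℤ) < ξ then (1:ℝ) else 0) * f ξ)) := by ring
      rw [step, Finset.sum_mul, Finset.mul_sum]
      congr 1
      apply Finset.sum_congr rfl
      intro j _
      ring
    simp only [hptw]
    have hint_i : ∀ i ∈ Finset.Icc 1 n, IntervalIntegrable
        (fun ξ => y i * ((if yh (i : ℤ) < ξ then (1:ℝ) else 0) * f ξ)
          - ∑ j ∈ Finset.Icc 1 T, (y i * ω j) *
              ((if yh (i : ℤ) < ξ then (1:ℝ) else 0) *
                (if ξ < yh ((i : ℤ) - (j : ℤ)) then (1:ℝ) else 0) * f ξ)) volume a b := by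
      intro i _
      exact ((hI1 (yh (i : ℤ))).const_mul (y i)).sub
        (intervalIntegrable_finset_sum _
          (G := fun (j : ℕ) ξ => (y i * ω j) *
            ((if yh (i : ℤ) < ξ then (1:ℝ) else 0) *
              (if ξ < yh ((i : ℤ) - (j : ℤ)) then (1:ℝ) else 0) * f ξ))
          fun (j : ℕ) _ =>
          (hI2 (yh (i : ℤ)) (yh ((i : ℤ) - (j : ℤ)))).const_mul (y i * ω j))
    rw [intervalIntegral.integral_finset_sum hint_i]
    apply Finset.sum_congr rfl
    intro i hi
    rw [intervalIntegral.integral_sub ((hI1 (yh (i : ℤ))).const_mul (y i))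
        (intervalIntegrable_finset_sum _
          (G := fun (j : ℕ) ξ => (y i * ω j) *
            ((if yh (i : ℤ) < ξ then (1:ℝ) else 0) *
              (if ξ < yh ((i : ℤ) - (j : ℤ)) then (1:ℝ) else 0) * f ξ))
          fun (j : ℕ) _ =>
          (hI2 (yh (i : ℤ)) (yh ((i : ℤ) - (j : ℤ)))).const_mul (y i * ω j)),
      intervalIntegral.integral_const_mul,
      intervalIntegral.integral_finset_sum (fun (j : ℕ) _ =>
        (hI2 (yh (i : ℤ)) (yh ((i : ℤ) - (j : ℤ)))).const_mul (y i * ω j))]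
    rw [hval1 _ (hmemc i hi)]
    have : ∀ j ∈ Finset.Icc 1 T,
        (∫ ξ in a..b, (y i * ω j) *
          ((if yh (i : ℤ) < ξ then (1:ℝ) else 0) *
            (if ξ < yh ((i : ℤ) - (j : ℤ)) then (1:ℝ) else 0) * f ξ))
        = (y i * ω j) * (F (yh ((i : ℤ) - (j : ℤ)))
            - F (min (yh (i : ℤ)) (yh ((i : ℤ) - (j : ℤ))))) := by
      intro j hj
      rw [intervalIntegral.integral_const_mul, hval2 _ (hmemc i hi) _ (hmemd i hi j hj)]
    rw [Finset.sum_congr rfl this]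
    have hS : (∑ j ∈ Finset.Icc 1 T, (y i * ω j) * (F (yh ((i : ℤ) - (j : ℤ)))
          - F (min (yh (i : ℤ)) (yh ((i : ℤ) - (j : ℤ))))))
        = y i * ∑ j ∈ Finset.Icc 1 T, ω j * (F (yh ((i : ℤ) - (j : ℤ)))
          - F (min (yh (i : ℤ)) (yh ((i : ℤ) - (j : ℤ))))) := by
      rw [Finset.mul_sum]
      exact Finset.sum_congr rfl fun j _ => by ring
    rw [hS]
    ring
  · -- max identity
    intro i hi j hj
    have hc := hmemc i hi
    have hd := hmemd i hi j hj
    rcases le_total (yh (i : ℤ)) (yh ((i : ℤ) - (j : ℤ))) with h | h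
    · rw [min_eq_left h]
      exact (max_eq_left (sub_nonneg.2 (hFmono _ hc _ hd h))).symm
    · rw [min_eq_right h, sub_self]
      exact (max_eq_right (sub_nonpos.2 (hFmono _ hd _ hc h))).symm
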